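/- Let V be a variety of Ω-algebras of a type without nullary operation symbols. Then each algebra in V has precisely one idempotent element if and only if V is polarized. -/

import Mathlib

structure Signature where
  symbols : Type
  arity : symbols → ℕ

structure Alg (S : Signature) where
  carrier : Type
  op : ∀ ω : S.symbols, (Fin (S.arity ω) → carrier) → carrier
  nonempty : Nonempty carrier

inductive Term (S : Signature) (X : Type) : Type
  | var : X → Term S X
  | app : ∀ ω : S.symbols, (Fin (S.arity ω) → Term S X) → Term S X

def Term.eval {S : Signature} {X : Type} (A : Alg S) (env : X → A.carrier) :
    Term S X → A.carrier
  | .var x => env x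
  | .app ω ts => A.op ω fun i => (ts i).eval A env

/-- The algebra `A` satisfies the identity `u = v`. -/
def Alg.sat {S : Signature} (A : Alg S) {X : Type} (u v : Term S X) : Prop :=
  ∀ env : X → A.carrier, u.eval A env = v.eval A env

/-- An identity: a pair of terms in the countably many variables `x₀, x₁, …`. -/
abbrev Ident (S : Signature) := Term S ℕ × Term S ℕ

/-- `A` lies in the variety axiomatized by the set of identities `E`. -/
def Alg.Models {S : Signature} (A : Alg S) (E : Set (Ident S)) : Prop :=
  ∀ e ∈ E, A.sat e.1 e.2

/-- The identity `u = v` holds in the variety axiomatized by `E`. -/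
def Conseq {S : Signature} (E : Set (Ident S)) {X : Type} (u v : Term S X) : Prop :=
  ∀ A : Alg S, A.Models E → A.sat u v

/-- `a` is an idempotent element of `A`. -/
def Alg.IsIdem {S : Signature} (A : Alg S) (a : A.carrier) : Prop :=
  ∀ ω : S.symbols, A.op ω (fun _ => a) = a

/-- `B` is (the universe of) a subalgebra of `A`. -/
def Alg.IsSubuniverse {S : Signature} (A : Alg S) (B : Set A.carrier) : Prop :=
  ∀ ω (a : Fin (S.arity ω) → A.carrier), (∀ i, a i ∈ B) → A.op ω a ∈ B

/-- The subalgebra of `A` on a nonempty subuniverse `B`. -/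
def Alg.subAlg {S : Signature} (A : Alg S) (B : Set A.carrier)
    (h : A.IsSubuniverse B) (hne : B.Nonempty) : Alg S where
  carrier := B
  op ω a := ⟨A.op ω fun i => (a i : A.carrier), h ω _ fun i => (a i).2⟩
  nonempty := hne.to_subtype

/-- A congruence of `A`: an equivalence relation compatible with all operations. -/
structure Congruence {S : Signature} (A : Alg S) where
  rel : A.carrier → A.carrier → Prop
  iseqv : Equivalence rel
  compat : ∀ ω (a b : Fin (S.arity ω) → A.carrier),
    (∀ i, rel (a i) (b i)) → rel (A.op ω a) (A.op ω b)

def Congruence.setoid {S : Signature} {A : Alg S} (θ : Congruence A) :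
    Setoid A.carrier := ⟨θ.rel, θ.iseqv⟩

/-- The quotient algebra `A/θ`. -/
noncomputable def Alg.quot {S : Signature} (A : Alg S) (θ : Congruence A) : Alg S where
  carrier := Quotient θ.setoid
  op ω q := Quotient.mk θ.setoid (A.op ω fun i => (q i).out)
  nonempty := A.nonempty.map (Quotient.mk θ.setoid)

/-- Membership in the Mal'tsev product of the varieties axiomatized by `V` and `W`:
`A` has a congruence `θ` with `A/θ` in (the variety of) `W` such that every
`θ`-class which is a subalgebra of `A` is an algebra in (the variety of) `V`. -/
def InMaltsev {S : Signature} (V W : Set (Ident S)) (A : Alg S) : Prop :=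
  ∃ θ : Congruence A, (A.quot θ).Models W ∧
    ∀ a : A.carrier, ∀ h : A.IsSubuniverse {b | θ.rel a b},
      (A.subAlg {b | θ.rel a b} h ⟨a, θ.iseqv.refl a⟩).Models V

/-- A class of algebras is a variety iff it is axiomatized by some set of identities. -/
def IsVarietyClass {S : Signature} (K : Alg S → Prop) : Prop :=
  ∃ E : Set (Ident S), ∀ A : Alg S, K A ↔ A.Models E

def TermIdem {S : Signature} (E : Set (Ident S)) {X : Type} (t : Term S X) : Prop :=
  ∀ ω : S.symbols, Conseq E (Term.app ω fun _ => t) t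

/-- The variety axiomatized by `E` is polarized: there is a unary term idempotent
whose induced operation is constant on every member of the variety. -/
def Polarized {S : Signature} (E : Set (Ident S)) : Prop :=
  ∃ t : Term S Unit, TermIdem E t ∧
    ∀ A : Alg S, A.Models E → ∀ a b : A.carrier,
      t.eval A (fun _ => a) = t.eval A (fun _ => b)


namespace Stmt2Aux

variable {S : Signature}

def subst {X Y : Type} (σ : X → Term S Y) : Term S X → Term S Y
  | .var x => σ x
  | .app ω ts => .app ω fun i => subst σ (ts i)

theorem eval_subst {X Y : Type} (A : Alg S) (env : Y → A.carrier)
    (σ : X → Term S Y) (u : Term S X) :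
    (subst σ u).eval A env = u.eval A (fun x => (σ x).eval A env) := by
  induction u with
  | var x => rfl
  | app ω ts ih => simp only [subst, Term.eval, ih]

theorem conseq_subst {X Y : Type} (V : Set (Ident S)) (σ : X → Term S Y)
    {u v : Term S X} (h : Conseq V u v) :
    Conseq V (subst σ u) (subst σ v) := by
  intro A hA env
  rw [eval_subst, eval_subst]
  exact h A hA _

theorem conseq_app {X : Type} (V : Set (Ident S)) (ω : S.symbols)
    {f g : Fin (S.arity ω) → Term S X} (h : ∀ i, Conseq V (f i) (g i)) :
    Conseq V (.app ω f) (.app ω g) := by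
  intro A hA env
  simp only [Term.eval]
  exact congrArg _ (funext fun i => h i A hA env)

def freeSetoid (V : Set (Ident S)) (X : Type) : Setoid (Term S X) :=
  ⟨fun u v => Conseq V u v,
   ⟨fun _ _ _ _ => rfl,
    fun h A hA env => (h A hA env).symm,
    fun h1 h2 A hA env => (h1 A hA env).trans (h2 A hA env)⟩⟩

noncomputable def free (V : Set (Ident S)) (X : Type) [h : Nonempty X] : Alg S where
  carrier := Quotient (freeSetoid V X)
  op ω qs := Quotient.mk _ (Term.app ω fun i => (qs i).out)
  nonempty := h.map fun x => Quotient.mk _ (Term.var x)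

theorem conseq_trans {X : Type} {V : Set (Ident S)} {u v w : Term S X}
    (h1 : Conseq V u v) (h2 : Conseq V v w) : Conseq V u w :=
  fun A hA env => (h1 A hA env).trans (h2 A hA env)

theorem out_rel (V : Set (Ident S)) {X : Type} (u : Term S X) :
    Conseq V ((Quotient.mk (freeSetoid V X) u).out) u := by
  have h := Quotient.out_eq (Quotient.mk (freeSetoid V X) u)
  exact Quotient.exact h

theorem free_eval (V : Set (Ident S)) {X Y : Type} [Nonempty X]
    (env : Y → (free V X).carrier) (u : Term S Y) :
    u.eval (free V X) env = Quotient.mk _ (subst (fun y => (env y).out) u) := by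
  induction u with
  | var y => exact (Quotient.out_eq _).symm
  | app ω ts ih =>
    show Quotient.mk _ (Term.app ω fun i => ((ts i).eval (free V X) env).out) = _
    apply Quotient.sound
    apply conseq_app
    intro i
    rw [ih i]
    exact out_rel V _

theorem free_models (V : Set (Ident S)) (X : Type) [Nonempty X] :
    (free V X).Models V := by
  intro e he env
  rw [free_eval, free_eval]
  exact Quotient.sound (conseq_subst V _ (fun A hA => hA e he))

theorem eval_const_idem {X : Type} (A : Alg S) {a : A.carrier} (ha : A.IsIdem a)
    (t : Term S X) : t.eval A (fun _ => a) = a := by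
  induction t with
  | var x => rfl
  | app ω ts ih =>
    show A.op ω (fun i => (ts i).eval A (fun _ => a)) = a
    simp only [ih]
    exact ha ω

end Stmt2Aux

theorem stmt_2 (S : Signature) (h0 : ∀ ω : S.symbols, 0 < S.arity ω)
    (V : Set (Ident S)) :
    (∀ A : Alg S, A.Models V → ∃! a : A.carrier, A.IsIdem a) ↔ Polarized V := by
  constructor
  · -- unique idempotents → polarized
    intro H
    obtain ⟨q, hq, huniq⟩ := H (Stmt2Aux.free V Unit) (Stmt2Aux.free_models V Unit)
    have ht : TermIdem V q.out := by
      intro ω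
      have h2 : Quotient.mk (Stmt2Aux.freeSetoid V Unit)
          (Term.app ω fun _ => q.out) = Quotient.mk _ q.out := by
        exact (hq ω).trans (Quotient.out_eq q).symm
      exact Quotient.exact h2
    refine ⟨q.out, ht, ?_⟩
    -- constancy via free algebra on two generators
    have key : Conseq V (Stmt2Aux.subst (fun _ => Term.var true) q.out)
        (Stmt2Aux.subst (fun _ => Term.var false) q.out) := by
      obtain ⟨p, hp, huniq2⟩ := H (Stmt2Aux.free V Bool) (Stmt2Aux.free_models V Bool)
      have idem : ∀ b : Bool, (Stmt2Aux.free V Bool).IsIdem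
          (Quotient.mk _ (Stmt2Aux.subst (fun _ => Term.var b) q.out)) := by
        intro b ω
        apply Quotient.sound
        exact Stmt2Aux.conseq_trans
          (Stmt2Aux.conseq_app V ω fun _ => Stmt2Aux.out_rel V _)
          (Stmt2Aux.conseq_subst V (fun _ => Term.var b) (ht ω))
      have e1 := huniq2 _ (idem true)
      have e2 := huniq2 _ (idem false)
      exact Quotient.exact (e1.trans e2.symm)
    intro A hA a b
    have := key A hA (fun c => if c then a else b)
    rw [Stmt2Aux.eval_subst, Stmt2Aux.eval_subst] at this
    exact this
  · -- polarized → unique idempotents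
    rintro ⟨t, ht, hconst⟩ A hA
    obtain ⟨a₀⟩ := A.nonempty
    refine ⟨t.eval A (fun _ => a₀), ?_, ?_⟩
    · intro ω
      exact ht ω A hA (fun _ => a₀)
    · intro a ha
      calc a = t.eval A (fun _ => a) := (Stmt2Aux.eval_const_idem A ha t).symm
        _ = t.eval A (fun _ => a₀) := hconst A hA a a₀
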